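/- Let n ≥ 1. There exists a constant C > 0 depending only on n such that for every Schwartz function φ on ℝⁿ satisfying sup_{x∈ℝⁿ} sup_{|β|≤1} (1+|x|)^{n+1}|D^β φ(x)| ≤ 1, every locally integrable function f on ℝⁿ, and every x ∈ ℝⁿ, sup_{t>0} sup_{|y−x|<t} |(φ_t * f)(y)| ≤ C·Mf(x), where φ_t(z) = t^{−n}φ(z/t) and M is the Hardy–Littlewood maximal operator Mf(x) = sup_{Q∋x} |Q|^{−1}∫_Q |f(y)| dy, the supremum taken over all cubes Q containing x. -/

import Mathlib

open MeasureTheory Metric Set ENNReal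
open scoped Classical

noncomputable section

abbrev Rn (n : ℕ) : Type := EuclideanSpace ℝ (Fin n)

/-- Axis-parallel cube centered at `c` with side length `r`. -/
def cube {n : ℕ} (c : Rn n) (r : ℝ) : Set (Rn n) := {x | ∀ i, |x i - c i| ≤ r / 2}

/-- The measure `w(E) = ∫_E w` with density `w` w.r.t. Lebesgue measure. -/
def wm {n : ℕ} (w : Rn n → ℝ) : Measure (Rn n) :=
  volume.withDensity (fun x => ENNReal.ofReal (w x))

/-- Muckenhoupt `A_q` condition for `q > 1`. -/
def IsAq {n : ℕ} (w : Rn n → ℝ) (q : ℝ) : Prop :=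
  (∀ x, 0 ≤ w x) ∧ LocallyIntegrable w volume ∧
  ∃ C > 0, ∀ (c : Rn n) (r : ℝ), 0 < r →
    (((volume (cube c r)).toReal⁻¹ * ∫ x in cube c r, w x) *
      (((volume (cube c r)).toReal⁻¹ * ∫ x in cube c r, w x ^ (-1 / (q - 1))) ^ (q - 1))) ≤ C

/-- Muckenhoupt `A_1` condition. -/
def IsA1 {n : ℕ} (w : Rn n → ℝ) : Prop :=
  (∀ x, 0 ≤ w x) ∧ LocallyIntegrable w volume ∧
  ∃ C > 0, ∀ (c : Rn n) (r : ℝ), 0 < r →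
    ∀ᵐ y ∂(volume.restrict (cube c r)),
      (volume (cube c r)).toReal⁻¹ * ∫ x in cube c r, w x ≤ C * w y

/-- Muckenhoupt `A_q` condition for `q ≥ 1`. -/
def IsMuckenhoupt {n : ℕ} (w : Rn n → ℝ) (q : ℝ) : Prop :=
  if q = 1 then IsA1 w else IsAq w q

/-- The parametric Marcinkiewicz integral `μ^ρ_Ω`. -/
def marc {n : ℕ} (ρ : ℝ) (Ω f : Rn n → ℝ) (x : Rn n) : ℝ :=
  (∫ t in Ioi (0:ℝ),
      (∫ y in {y : Rn n | dist x y ≤ t}, Ω (x - y) * ‖x - y‖ ^ (ρ - (n:ℝ)) * f y) ^ 2 *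
        t ^ (-(2 * ρ + 1))) ^ ((1:ℝ)/2)

/-- `Ω` is homogeneous of degree zero. -/
def HomZero {n : ℕ} (Ω : Rn n → ℝ) : Prop :=
  ∀ t : ℝ, 0 < t → ∀ x : Rn n, x ≠ 0 → Ω (t • x) = Ω x

/-- `Ω` has mean value zero on the unit sphere `S^{n-1}`. -/
def MeanZero {n : ℕ} (Ω : Rn n → ℝ) : Prop :=
  ∫ x : Metric.sphere (0 : Rn n) 1, Ω (x : Rn n) ∂((volume : Measure (Rn n)).toSphere) = 0

/-- `Ω ∈ Lip_α(S^{n-1})` with Lipschitz constant `L`. -/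
def LipSphere {n : ℕ} (Ω : Rn n → ℝ) (α L : ℝ) : Prop :=
  ∀ x y : Rn n, ‖x‖ = 1 → ‖y‖ = 1 → |Ω x - Ω y| ≤ L * ‖x - y‖ ^ α

/-- `a` is a `w`-`(p,q,0)`-atom supported in the cube `Q(x₀, r)`. -/
def IsAtomOn {n : ℕ} (w : Rn n → ℝ) (p q : ℝ) (a : Rn n → ℝ) (x₀ : Rn n) (r : ℝ) : Prop :=
  Measurable a ∧ Integrable a volume ∧
  (∀ x, x ∉ cube x₀ r → a x = 0) ∧
  (∫ x in cube x₀ r, |a x| ^ q * w x) ^ (1/q) ≤ (∫ x in cube x₀ r, w x) ^ (1/q - 1/p) ∧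
  (∫ x, a x) = 0

/-- `a` is a `w`-`(p,q,0)`-atom. -/
def IsWAtom {n : ℕ} (w : Rn n → ℝ) (p q : ℝ) (a : Rn n → ℝ) : Prop :=
  ∃ (x₀ : Rn n) (r : ℝ), 0 < r ∧ IsAtomOn w p q a x₀ r

/-- The weighted `L^p` (quasi-)norm `‖f‖_{L^p_w} = (∫ |f|^p w)^{1/p}`. -/
def wLp {n : ℕ} (w : Rn n → ℝ) (p : ℝ) (f : Rn n → ℝ) : ℝ≥0∞ :=
  (∫⁻ x, ENNReal.ofReal (|f x| ^ p * w x)) ^ (1/p)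


lemma abs_coord_le_norm {n : ℕ} (x : Rn n) (i : Fin n) : |x i| ≤ ‖x‖ := by
  rw [EuclideanSpace.norm_eq, ← Real.sqrt_sq_eq_abs]
  apply Real.sqrt_le_sqrt
  simp only [Real.norm_eq_abs, sq_abs]
  exact Finset.single_le_sum (f := fun j => x j ^ 2) (fun j _ => sq_nonneg _) (Finset.mem_univ i)

lemma cube_eq_preimage {n : ℕ} (c : Rn n) (r : ℝ) :
    cube c r = (MeasurableEquiv.toLp 2 (Fin n → ℝ)).symm ⁻¹'
      (Set.univ.pi fun i => Icc (c i - r/2) (c i + r/2)) := by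
  ext x
  simp only [cube, mem_setOf_eq, mem_preimage, Set.mem_pi, mem_univ, forall_true_left, mem_Icc,
    MeasurableEquiv.toLp_symm_apply]
  constructor
  · intro h i; have := abs_le.1 (h i); constructor <;> linarith [this.1, this.2]
  · intro h i; rw [abs_le]; have := h i; constructor <;> linarith [this.1, this.2]

lemma volume_cube {n : ℕ} (c : Rn n) (r : ℝ) :
    volume (cube c r) = ENNReal.ofReal r ^ n := by
  rw [cube_eq_preimage,
    (EuclideanSpace.volume_preserving_symm_measurableEquiv_toLp (Fin n)).measure_preimage
      ((MeasurableSet.univ_pi fun i => measurableSet_Icc).nullMeasurableSet)]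
  rw [volume_pi_pi]
  have : ∀ i : Fin n, volume (Icc (c i - r/2) (c i + r/2)) = ENNReal.ofReal r := by
    intro i; rw [Real.volume_Icc]; congr 1; ring
  simp [this]

/-- Dyadic annuli around `y` at scale `t`. -/
def ann {n : ℕ} (y : Rn n) (t : ℝ) : ℕ → Set (Rn n)
  | 0 => ball y t
  | (k+1) => ball y (2^(k+1) * t) \ ball y (2^k * t)

lemma ann_subset {n : ℕ} (y : Rn n) (t : ℝ) (k : ℕ) :
    ann y t k ⊆ ball y (2^k * t) := by
  cases k with
  | zero => simp [ann]
  | succ k => exact diff_subset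

lemma ann_lower {n : ℕ} (y : Rn n) (t : ℝ) (k : ℕ) {z : Rn n} (hz : z ∈ ann y t (k+1)) :
    2^k * t ≤ dist z y := by
  have := hz.2
  simpa [mem_ball, not_lt] using this

lemma ann_union {n : ℕ} (y : Rn n) {t : ℝ} (ht : 0 < t) : (⋃ k, ann y t k) = univ := by
  ext z
  simp only [mem_iUnion, mem_univ, iff_true]
  have hex : ∃ k : ℕ, dist z y < 2^k * t := by
    obtain ⟨k, hk⟩ := pow_unbounded_of_one_lt (dist z y / t) (by norm_num : (1:ℝ) < 2)
    exact ⟨k, by rwa [div_lt_iff₀ ht] at hk⟩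
  have hK := Nat.find_spec hex
  rcases hKdef : Nat.find hex with _ | m
  · rw [hKdef] at hK
    exact ⟨0, by simpa [ann, mem_ball] using hK⟩
  · rw [hKdef] at hK
    refine ⟨m+1, ⟨by simpa [mem_ball] using hK, ?_⟩⟩
    have := Nat.find_min hex (show m < Nat.find hex by omega)
    simpa [mem_ball] using this

lemma measurableSet_ann {n : ℕ} (y : Rn n) (t : ℝ) (k : ℕ) : MeasurableSet (ann y t k) := by
  cases k with
  | zero => exact measurableSet_ball
  | succ k => exact measurableSet_ball.diff measurableSet_ball

/-- the grand maximal function is pointwise dominated by the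
Hardy–Littlewood maximal function. -/
theorem statement17 (n : ℕ) (hn : 1 ≤ n) :
    ∃ C > 0, ∀ φ : SchwartzMap (Rn n) ℝ,
      (∀ x : Rn n, (1 + ‖x‖) ^ ((n : ℝ) + 1) * |φ x| ≤ 1) →
      (∀ (x : Rn n) (i : Fin n),
        (1 + ‖x‖) ^ ((n : ℝ) + 1) * |fderiv ℝ (⇑φ) x (EuclideanSpace.single i 1)| ≤ 1) →
      ∀ f : Rn n → ℝ, LocallyIntegrable f volume →
      ∀ x : Rn n,
        (⨆ (t : ℝ) (_ : 0 < t) (y : Rn n) (_ : dist y x < t),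
            ENNReal.ofReal |∫ z : Rn n, (t ^ (n : ℕ))⁻¹ * φ (t⁻¹ • (y - z)) * f z|) ≤
          ENNReal.ofReal C *
            ⨆ (c : Rn n) (r : ℝ) (_ : 0 < r) (_ : x ∈ cube c r),
              (∫⁻ z in cube c r, ENNReal.ofReal |f z|) / volume (cube c r) := by
  refine ⟨2 ^ (3 * n + 2), by positivity, ?_⟩
  intro φ hφ0 _ f _ x
  set M : ℝ≥0∞ := ⨆ (c : Rn n) (r : ℝ) (_ : 0 < r) (_ : x ∈ cube c r),
      (∫⁻ z in cube c r, ENNReal.ofReal |f z|) / volume (cube c r) with hM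
  refine iSup₂_le fun t ht => iSup₂_le fun y hy => ?_
  -- integral over any cube centered at x is controlled by M
  have key : ∀ R : ℝ, 0 < R →
      (∫⁻ z in cube x R, ENNReal.ofReal |f z|) ≤ M * ENNReal.ofReal R ^ n := by
    intro R hR
    have hx : x ∈ cube x R := fun i => by
      simpa using by positivity
    have h1 : (∫⁻ z in cube x R, ENNReal.ofReal |f z|) / volume (cube x R) ≤ M := by
      rw [hM]
      exact le_iSup_of_le x (le_iSup_of_le R (le_iSup_of_le hR (le_iSup_of_le hx le_rfl)))
    rw [volume_cube] at h1
    rwa [ENNReal.div_le_iff (pow_ne_zero _ (by simp [hR, not_le])) (pow_ne_top ofReal_ne_top)]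
      at h1
  -- annuli are inside cubes centered at x
  have hcube : ∀ k : ℕ, ann y t k ⊆ cube x (2^(k+2) * t) := by
    intro k z hz
    have hzy : dist z y < 2^k * t := ann_subset y t k hz
    intro i
    have h1 : |z i - x i| ≤ |z i - y i| + |y i - x i| := by
      have := abs_add_le (z i - y i) (y i - x i); simpa [sub_add_sub_cancel] using this
    have h2 : |z i - y i| ≤ dist z y := by
      have := abs_coord_le_norm (z - y) i
      simpa [PiLp.sub_apply, dist_eq_norm] using this
    have h3 : |y i - x i| ≤ dist y x := by
      have := abs_coord_le_norm (y - x) i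
      simpa [PiLp.sub_apply, dist_eq_norm] using this
    have h4 : (1:ℝ) ≤ 2^k := one_le_pow₀ (by norm_num)
    have h6 : (2:ℝ)^(k+2) = 4 * 2^k := by ring
    have h5 : 2^k * t + t ≤ 2^(k+2) * t / 2 := by
      rw [h6]; nlinarith
    have h7 : |z i - x i| < 2^k * t + t := by
      calc |z i - x i| ≤ |z i - y i| + |y i - x i| := h1
        _ ≤ dist z y + dist y x := add_le_add h2 h3
        _ < 2^k * t + t := add_lt_add hzy hy
    linarith
  -- kernel bound on each annulus
  have hker : ∀ (k : ℕ) (z : Rn n), z ∈ ann y t k →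
      |φ (t⁻¹ • (y - z))| ≤ 2^(n+1) / 2^(k*(n+1)) := by
    intro k z hz
    set u := t⁻¹ • (y - z) with hu
    have hb1 : (1:ℝ) ≤ 1 + ‖u‖ := by linarith [norm_nonneg u]
    have hpos : (0:ℝ) < (1 + ‖u‖) ^ ((n:ℝ)+1) := Real.rpow_pos_of_pos (by linarith) _
    have h0 : |φ u| ≤ ((1 + ‖u‖) ^ ((n:ℝ)+1))⁻¹ := by
      rw [inv_eq_one_div, le_div_iff₀ hpos, mul_comm]
      exact hφ0 u
    have h6 : (2:ℝ)^(k*(n+1)) / 2^(n+1) ≤ (1 + ‖u‖) ^ ((n:ℝ)+1) := by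
      cases k with
      | zero =>
        have ha : (1:ℝ) ≤ (1 + ‖u‖) ^ ((n:ℝ)+1) := by
          calc (1:ℝ) = 1 ^ ((n:ℝ)+1) := (Real.one_rpow _).symm
            _ ≤ (1 + ‖u‖) ^ ((n:ℝ)+1) := Real.rpow_le_rpow zero_le_one hb1 (by positivity)
        have hb : (2:ℝ)^(0*(n+1)) / 2^(n+1) ≤ 1 := by
          rw [zero_mul, pow_zero, div_le_one (by positivity)]
          exact one_le_pow₀ (by norm_num)
        linarith
      | succ m =>
        have h9 : 2^m * t ≤ dist z y := ann_lower y t m hz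
        have h10 : ‖u‖ = t⁻¹ * dist z y := by
          rw [hu, norm_smul, Real.norm_eq_abs, abs_of_pos (inv_pos.2 ht), dist_comm,
            dist_eq_norm]
        have hge : (2:ℝ)^m ≤ ‖u‖ := by
          rw [h10]
          calc (2:ℝ)^m = t⁻¹ * (2^m * t) := by field_simp
            _ ≤ t⁻¹ * dist z y := by
                have : (0:ℝ) ≤ t⁻¹ := (inv_pos.2 ht).le
                exact mul_le_mul_of_nonneg_left h9 this
        have h11 : ((2:ℝ)^m) ^ ((n:ℝ)+1) ≤ (1 + ‖u‖) ^ ((n:ℝ)+1) :=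
          Real.rpow_le_rpow (by positivity) (by linarith) (by positivity)
        have h12 : ((2:ℝ)^m) ^ ((n:ℝ)+1) = 2^(m*(n+1)) := by
          rw [← Real.rpow_natCast 2 m, ← Real.rpow_mul (by norm_num),
            ← Real.rpow_natCast 2 (m*(n+1))]
          congr 1; push_cast; ring
        have h13 : (2:ℝ)^((m+1)*(n+1)) / 2^(n+1) = 2^(m*(n+1)) := by
          rw [show (m+1)*(n+1) = m*(n+1)+(n+1) by ring, pow_add]
          field_simp
        rw [h13]; rw [h12] at h11; exact h11
    have h7 := inv_anti₀ (by positivity : (0:ℝ) < 2^(k*(n+1)) / 2^(n+1)) h6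
    rw [inv_div] at h7
    exact h0.trans h7
  -- pointwise bound on each annulus
  have hpt : ∀ (k : ℕ) (z : Rn n), z ∈ ann y t k →
      ENNReal.ofReal |(t ^ n)⁻¹ * φ (t⁻¹ • (y - z)) * f z| ≤
        ENNReal.ofReal ((t^n)⁻¹ * (2^(n+1) / 2^(k*(n+1)))) * ENNReal.ofReal |f z| := by
    intro k z hz
    rw [← ENNReal.ofReal_mul (by positivity)]
    apply ENNReal.ofReal_le_ofReal
    rw [abs_mul, abs_mul, abs_inv, abs_pow, abs_of_pos ht]
    have hk := hker k z hz
    gcongr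
    all_goals positivity
  -- integral over each annulus
  have hann : ∀ k : ℕ,
      (∫⁻ z in ann y t k, ENNReal.ofReal |(t ^ n)⁻¹ * φ (t⁻¹ • (y - z)) * f z|) ≤
        M * ENNReal.ofReal (2^(3*n+1) / 2^k) := by
    intro k
    calc (∫⁻ z in ann y t k, ENNReal.ofReal |(t ^ n)⁻¹ * φ (t⁻¹ • (y - z)) * f z|)
        ≤ ∫⁻ z in ann y t k,
            ENNReal.ofReal ((t^n)⁻¹ * (2^(n+1) / 2^(k*(n+1)))) * ENNReal.ofReal |f z| :=
          setLIntegral_mono' (measurableSet_ann y t k) (fun z hz => hpt k z hz)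
      _ = ENNReal.ofReal ((t^n)⁻¹ * (2^(n+1) / 2^(k*(n+1)))) *
            ∫⁻ z in ann y t k, ENNReal.ofReal |f z| :=
          lintegral_const_mul' _ _ ofReal_ne_top
      _ ≤ ENNReal.ofReal ((t^n)⁻¹ * (2^(n+1) / 2^(k*(n+1)))) *
            ∫⁻ z in cube x (2^(k+2) * t), ENNReal.ofReal |f z| := by
          gcongr
          exact hcube k
      _ ≤ ENNReal.ofReal ((t^n)⁻¹ * (2^(n+1) / 2^(k*(n+1)))) *
            (M * ENNReal.ofReal (2^(k+2) * t) ^ n) := by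
          gcongr
          exact key _ (by positivity)
      _ = M * ENNReal.ofReal (2^(3*n+1) / 2^k) := by
          rw [← ENNReal.ofReal_pow (by positivity), mul_left_comm,
            ← ENNReal.ofReal_mul (by positivity)]
          congr 2
          have ht' : (t:ℝ)^n ≠ 0 := by positivity
          rw [mul_pow, ← pow_mul]
          field_simp
          ring
  -- sum the geometric series
  have hsum : ∑' k : ℕ, M * ENNReal.ofReal ((2:ℝ)^(3*n+1) / 2^k) =
      ENNReal.ofReal ((2:ℝ) ^ (3*n+2)) * M := by
    have h1 : ∀ k : ℕ, ENNReal.ofReal ((2:ℝ)^(3*n+1) / 2^k) =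
        ENNReal.ofReal ((2:ℝ)^(3*n+1)) * ((2:ℝ≥0∞)⁻¹)^k := by
      intro k
      have h2 : ENNReal.ofReal ((2:ℝ)⁻¹) = (2:ℝ≥0∞)⁻¹ := by
        rw [ENNReal.ofReal_inv_of_pos (by norm_num), ENNReal.ofReal_ofNat]
      rw [div_eq_mul_inv, ← inv_pow, ENNReal.ofReal_mul (by positivity)]
      congr 1
      rw [ENNReal.ofReal_pow (by norm_num), h2]
    simp_rw [h1]
    rw [ENNReal.tsum_mul_left, ENNReal.tsum_mul_left, ENNReal.tsum_geometric,
      ENNReal.one_sub_inv_two, inv_inv]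
    have h3 : ENNReal.ofReal ((2:ℝ)^(3*n+1)) * 2 = ENNReal.ofReal ((2:ℝ)^(3*n+2)) := by
      rw [show (2:ℝ≥0∞) = ENNReal.ofReal 2 by simp, ← ENNReal.ofReal_mul (by positivity)]
      exact congrArg ENNReal.ofReal (by ring)
    rw [h3]
    exact mul_comm _ _
  calc ENNReal.ofReal |∫ z : Rn n, (t ^ n)⁻¹ * φ (t⁻¹ • (y - z)) * f z|
      = (‖∫ z : Rn n, (t ^ n)⁻¹ * φ (t⁻¹ • (y - z)) * f z‖₊ : ℝ≥0∞) :=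
        (Real.enorm_eq_ofReal_abs _).symm
    _ ≤ ∫⁻ z, ‖(t ^ n)⁻¹ * φ (t⁻¹ • (y - z)) * f z‖₊ :=
        enorm_integral_le_lintegral_enorm _
    _ = ∫⁻ z, ENNReal.ofReal |(t ^ n)⁻¹ * φ (t⁻¹ • (y - z)) * f z| := by
        simp_rw [← enorm_eq_nnnorm, Real.enorm_eq_ofReal_abs]
    _ = ∫⁻ z in ⋃ k, ann y t k, ENNReal.ofReal |(t ^ n)⁻¹ * φ (t⁻¹ • (y - z)) * f z| := by
        rw [ann_union y ht, setLIntegral_univ]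
    _ ≤ ∑' k : ℕ, ∫⁻ z in ann y t k, ENNReal.ofReal |(t ^ n)⁻¹ * φ (t⁻¹ • (y - z)) * f z| :=
        lintegral_iUnion_le _ _
    _ ≤ ∑' k : ℕ, M * ENNReal.ofReal ((2:ℝ)^(3*n+1) / 2^k) := ENNReal.tsum_le_tsum hann
    _ = ENNReal.ofReal ((2:ℝ) ^ (3*n+2)) * M := hsum


end
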